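/- arXiv:1404.3675 — 5 statements merged into one kernel-verified Lean document; each statement's English description precedes it below -/
import Mathlib

section
/- Every 1-Helly composite class is simple: if T is a composite class (a union of intersections of atomic classes) satisfying the 1-Helly property, then T equals the intersection ⋂_{f ∈ F} T_f where F = {f : f preserves every relation R such that {R} ∈ T}. Consequently, a composite class is simple if and only if it is 1-Helly. -/
/-- A relation over ℕ: an arity together with a set of tuples. -/
def NRel : Type := Σ r : ℕ, Set (Fin r → ℕ)

/-- An operation on ℕ: an arity together with a finitary function. -/
def NOp : Type := Σ a : ℕ, (Fin a → ℕ) → ℕ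

/-- An operation preserves a relation (is a polymorphism of it). -/
def Preserves (g : NOp) (R : NRel) : Prop :=
  ∀ ts : Fin g.1 → (Fin R.1 → ℕ), (∀ i, ts i ∈ R.2) →
    (fun j => g.2 (fun i => ts i j)) ∈ R.2

/-- The atomic class induced by an operation. -/
def AtomicClass (g : NOp) : Set (Set NRel) := {Γ | ∀ R ∈ Γ, Preserves g R}

/-- A simple class: an intersection of atomic classes. -/
def SimpleClass (F : Set NOp) : Set (Set NRel) := ⋂ g ∈ F, AtomicClass g

def IsSimple (T : Set (Set NRel)) : Prop := ∃ F : Set NOp, T = SimpleClass F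

/-- A composite class: a union of simple classes. -/
def IsComposite (T : Set (Set NRel)) : Prop :=
  ∃ 𝒮 : Set (Set NOp), T = ⋃ F ∈ 𝒮, SimpleClass F

def OneHelly (T : Set (Set NRel)) : Prop :=
  ∀ Γ : Set NRel, (∀ R ∈ Γ, ({R} : Set NRel) ∈ T) → Γ ∈ T

/-- A 1-Helly composite class T is simple: it equals the intersection of the
atomic classes T_f over all operations f preserving every relation R with
{R} ∈ T.  Consequently, a composite class is simple iff it is 1-Helly. -/
theorem composite_oneHelly_iff_simple (T : Set (Set NRel)) (hT : IsComposite T) :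
    (OneHelly T →
      T = SimpleClass {g : NOp | ∀ R : NRel, ({R} : Set NRel) ∈ T → Preserves g R})
    ∧ (IsSimple T ↔ OneHelly T) := by
  obtain ⟨𝒮, h𝒮⟩ := hT
  have memSimple : ∀ (F : Set NOp) (Γ : Set NRel),
      Γ ∈ SimpleClass F ↔ ∀ g ∈ F, ∀ R ∈ Γ, Preserves g R := by
    intro F Γ
    simp [SimpleClass, AtomicClass, Set.mem_iInter]
  have key : OneHelly T →
      T = SimpleClass {g : NOp | ∀ R : NRel, ({R} : Set NRel) ∈ T → Preserves g R} := by
    intro hH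
    have hSinT : {R : NRel | ({R} : Set NRel) ∈ T} ∈ ⋃ F ∈ 𝒮, SimpleClass F := by
      rw [← h𝒮]; exact hH _ (fun R hR => hR)
    obtain ⟨F, hF𝒮, hSF⟩ := Set.mem_iUnion₂.mp hSinT
    have hFsub : F ⊆ {g : NOp | ∀ R : NRel, ({R} : Set NRel) ∈ T → Preserves g R} := by
      intro g hg R hRT
      exact (memSimple F _).mp hSF g hg R hRT
    ext Γ
    constructor
    · intro hΓ
      rw [memSimple]
      intro g hg R hRΓ
      have hRT : ({R} : Set NRel) ∈ T := by
        rw [h𝒮] at hΓ ⊢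
        obtain ⟨F', hF', hΓF'⟩ := Set.mem_iUnion₂.mp hΓ
        refine Set.mem_iUnion₂.mpr ⟨F', hF', ?_⟩
        rw [memSimple] at hΓF' ⊢
        intro g' hg' R' hR'
        rw [Set.mem_singleton_iff] at hR'
        exact hR' ▸ hΓF' g' hg' R hRΓ
      exact hg R hRT
    · intro hΓ
      rw [h𝒮]
      refine Set.mem_iUnion₂.mpr ⟨F, hF𝒮, ?_⟩
      rw [memSimple] at hΓ ⊢
      intro g hg R hR
      exact hΓ g (hFsub hg) R hR
  refine ⟨key, ⟨?_, fun hH => ⟨_, key hH⟩⟩⟩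
  rintro ⟨F, rfl⟩ Γ hΓ
  rw [memSimple]
  intro g hg R hR
  have h1 := hΓ R hR
  rw [memSimple] at h1
  exact h1 g hg R rfl
end

section
/- Let h be a positive integer and 𝒯 = {T_i : i ∈ I} a family of 1-Helly hereditary classes of constraint languages. Define T = {Γ : Γ belongs to all but at most h of the classes T_i}. Then T is (h+1)-Helly: if every sublanguage of Γ of size at most h+1 belongs to T, then Γ belongs to T. -/
/-- If `𝒯 = {T i : i ∈ I}` is a family of 1-Helly hereditary classes of
constraint languages (languages being sets of relations of an abstract type
`α`) and `h ≥ 1`, then the class `T` of languages belonging to all but at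
most `h` of the classes `T i` is `(h+1)`-Helly. -/
theorem allButAtMost_h_is_hPlusOne_Helly
    {α I : Type*} (T : I → Set (Set α)) (h : ℕ) (hpos : 1 ≤ h)
    (hHelly : ∀ i, ∀ Γ : Set α, (∀ R ∈ Γ, ({R} : Set α) ∈ T i) → Γ ∈ T i)
    (hHered : ∀ i, ∀ Γ Γ' : Set α, Γ ∈ T i → Γ' ⊆ Γ → Γ' ∈ T i)
    (Γ : Set α)
    (hsub : ∀ Γ' ⊆ Γ, Γ'.Finite → Γ'.encard ≤ h + 1 →
      {i : I | Γ' ∉ T i}.encard ≤ h) :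
    {i : I | Γ ∉ T i}.encard ≤ h := by
  by_contra hc
  push_neg at hc
  have hle : (h + 1 : ℕ∞) ≤ {i : I | Γ ∉ T i}.encard := Order.add_one_le_of_lt hc
  obtain ⟨J, hJsub, hJcard⟩ := Set.exists_subset_encard_eq hle
  have hJfin : J.Finite := Set.finite_of_encard_eq_coe (by exact_mod_cast hJcard)
  haveI : Finite J := hJfin.to_subtype
  have hch : ∀ j : J, ∃ R ∈ Γ, ({R} : Set α) ∉ T j := by
    rintro ⟨j, hj⟩
    by_contra hforall
    push_neg at hforall
    exact (hJsub hj) (hHelly j Γ hforall)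
  choose f hfΓ hfnot using hch
  set Γ' : Set α := Set.range f with hΓ'
  have hΓ'sub : Γ' ⊆ Γ := by rintro x ⟨j, rfl⟩; exact hfΓ j
  have hΓ'fin : Γ'.Finite := Set.finite_range f
  have hΓ'card : Γ'.encard ≤ h + 1 := by
    calc Γ'.encard = (f '' Set.univ).encard := by rw [Set.image_univ]
    _ ≤ (Set.univ : Set J).encard := Set.encard_image_le _ _
    _ = J.encard := (Set.encard_univ J).trans (ENat.card_coe_set_eq J)
    _ = h + 1 := hJcard
  have hJsub' : J ⊆ {i : I | Γ' ∉ T i} := by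
    intro j hj hmem
    exact hfnot ⟨j, hj⟩ (hHered j Γ' {f ⟨j, hj⟩} hmem (by
      simp only [Set.singleton_subset_iff]; exact ⟨⟨j, hj⟩, rfl⟩))
  have := hsub Γ' hΓ'sub hΓ'fin hΓ'card
  have h2 : (h + 1 : ℕ∞) ≤ (h : ℕ∞) :=
    hJcard ▸ (Set.encard_le_encard hJsub').trans this
  have h3 : h + 1 ≤ h := by exact_mod_cast h2
  omega
end

section
/- Let I be an index set and for each R in some universe of relations let S(R) ⊆ I be a finite set. Suppose Γ is a nonempty finite set of relations such that for every subset Γ' ⊆ Γ with |Γ'| ≤ h+1 we have |⋃_{R ∈ Γ'} S(R)| ≤ h, where h ≥ 1. Then |⋃_{R ∈ Γ} S(R)| ≤ h. -/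
/-- Combinatorial core of the (h+1)-Helly result: if every subset `Γ'` of a
nonempty finite set `Γ` with `|Γ'| ≤ h + 1` satisfies
`|⋃_{R ∈ Γ'} S R| ≤ h`, then `|⋃_{R ∈ Γ} S R| ≤ h`. -/
theorem union_bound_from_small_subsets
    {α I : Type*} [DecidableEq I] (S : α → Finset I) (h : ℕ) (hpos : 1 ≤ h)
    (Γ : Finset α) (hne : Γ.Nonempty)
    (hsub : ∀ Γ' ⊆ Γ, Γ'.card ≤ h + 1 → (Γ'.biUnion S).card ≤ h) :
    (Γ.biUnion S).card ≤ h := by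
  classical
  -- candidate family: subsets of Γ of size ≤ h+1
  set T : Finset (Finset α) := Γ.powerset.filter (fun s => s.card ≤ h + 1) with hT
  have hTmem : ∀ s, s ∈ T ↔ s ⊆ Γ ∧ s.card ≤ h + 1 := by
    intro s; simp [hT, Finset.mem_filter, Finset.mem_powerset]
  have hTne : T.Nonempty := ⟨∅, by simp [hTmem]⟩
  -- maximize (union card, then minimize card) lexicographically
  set f : Finset α → ℕ := fun s => (s.biUnion S).card * (h + 2) + (h + 1 - s.card) with hf
  obtain ⟨G, hGT, hGmax⟩ := T.exists_max_image f hTne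
  obtain ⟨hGsub, hGcard⟩ := (hTmem G).mp hGT
  -- key: the union card of G is maximal among members of T
  have hmaxu : ∀ s ∈ T, (s.biUnion S).card ≤ (G.biUnion S).card := by
    intro s hs
    by_contra hlt
    push_neg at hlt
    have := hGmax s hs
    simp only [hf] at this
    have h1 : (G.biUnion S).card * (h + 2) + (h + 1 - G.card)
        < (s.biUnion S).card * (h + 2) + (h + 1 - s.card) := by
      have h2 : h + 1 - G.card ≤ h + 1 := Nat.sub_le _ _
      have h3 : (G.biUnion S).card + 1 ≤ (s.biUnion S).card := hlt
      have h4 : ((G.biUnion S).card + 1) * (h + 2) ≤ (s.biUnion S).card * (h + 2) :=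
        Nat.mul_le_mul_right _ h3
      have h5 : (G.biUnion S).card * (h+2) + (h+2) = ((G.biUnion S).card + 1) * (h + 2) := by ring
      omega
    omega
  -- G has card ≤ h
  have hGh : G.card ≤ h := by
    by_contra hgt
    push_neg at hgt
    have hGcard' : G.card = h + 1 := le_antisymm hGcard hgt
    -- each R in G contributes a private element
    have hpriv : ∀ R ∈ G, ∃ x, x ∈ S R ∧ x ∉ (G.erase R).biUnion S := by
      intro R hR
      by_contra hcon
      push_neg at hcon
      have hsubU : S R ⊆ (G.erase R).biUnion S := fun x hx => by
        by_contra hxx; exact hxx (hcon x hx)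
      -- then erase R gives same union with smaller card: contradicts maximality
      have hUeq : G.biUnion S = (G.erase R).biUnion S := by
        apply Finset.Subset.antisymm
        · intro x hx
          simp only [Finset.mem_biUnion] at hx ⊢
          obtain ⟨R', hR', hx⟩ := hx
          by_cases hRR : R' = R
          · subst hRR
            exact Finset.mem_biUnion.mp (hsubU hx)
          · exact ⟨R', Finset.mem_erase.mpr ⟨hRR, hR'⟩, hx⟩
        · exact Finset.biUnion_subset_biUnion_of_subset_left _ (Finset.erase_subset _ _)
      have hEm : G.erase R ∈ T := (hTmem _).mpr
        ⟨(Finset.erase_subset _ _).trans hGsub, le_trans (Finset.card_erase_le) hGcard⟩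
      have := hGmax _ hEm
      have hce : (G.erase R).card = h := by
        rw [Finset.card_erase_of_mem hR, hGcard']
        omega
      simp only [hf] at this
      rw [← hUeq, hce, hGcard'] at this
      omega
    choose x hx1 hx2 using hpriv
    -- the private elements are distinct, all in the union
    have hinj : Set.InjOn (fun R : {R // R ∈ G} => x R.1 R.2) Set.univ := by
      rintro ⟨R, hR⟩ - ⟨R', hR'⟩ - heq
      simp only at heq
      by_contra hne'
      have hRR' : R ≠ R' := fun hc => hne' (by simpa using hc)
      have : x R' hR' ∈ (G.erase R).biUnion S :=
        Finset.mem_biUnion.mpr ⟨R', Finset.mem_erase.mpr ⟨hRR'.symm, hR'⟩, hx1 R' hR'⟩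
      rw [← heq] at this
      exact hx2 R hR this
    have hcardle : G.card ≤ (G.biUnion S).card := by
      have : (G.attach.image (fun R : {R // R ∈ G} => x R.1 R.2)).card = G.attach.card := by
        apply Finset.card_image_of_injOn
        intro a _ b _ hab
        exact hinj (Set.mem_univ a) (Set.mem_univ b) hab
      rw [Finset.card_attach] at this
      rw [← this]
      apply Finset.card_le_card
      intro y hy
      simp only [Finset.mem_image, Finset.mem_attach, true_and] at hy
      obtain ⟨⟨R, hR⟩, rfl⟩ := hy
      exact Finset.mem_biUnion.mpr ⟨R, hR, hx1 R hR⟩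
    have := hsub G hGsub hGcard
    omega
  -- every R in Γ has S R ⊆ G.biUnion S
  have hall : ∀ R ∈ Γ, S R ⊆ G.biUnion S := by
    intro R hR
    have hins : insert R G ∈ T := (hTmem _).mpr
      ⟨Finset.insert_subset hR hGsub, le_trans (Finset.card_insert_le _ _) (by omega)⟩
    have hle : ((insert R G).biUnion S).card ≤ (G.biUnion S).card := hmaxu _ hins
    have hsub2 : G.biUnion S ⊆ (insert R G).biUnion S :=
      Finset.biUnion_subset_biUnion_of_subset_left _ (Finset.subset_insert _ _)
    have heq : (insert R G).biUnion S = G.biUnion S :=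
      (Finset.eq_of_subset_of_card_le hsub2 hle).symm
    intro x hxS
    rw [← heq]
    exact Finset.mem_biUnion.mpr ⟨R, Finset.mem_insert_self _ _, hxS⟩
  have : Γ.biUnion S ⊆ G.biUnion S := by
    intro x hx
    obtain ⟨R, hR, hxS⟩ := Finset.mem_biUnion.mp hx
    exact hall R hR hxS
  calc (Γ.biUnion S).card ≤ (G.biUnion S).card := Finset.card_le_card this
    _ ≤ h := hsub G hGsub hGcard
end

section
/- Any union of h simple classes is h-Helly: if T = T_1 ∪ ... ∪ T_h where each T_i is a 1-Helly hereditary class, and Γ is a language such that every sublanguage of Γ of size at most h is in T, then Γ ∈ T. -/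
/-- Any union of `h` simple (i.e. 1-Helly hereditary) classes is `h`-Helly:
if every sublanguage of `Γ` of size at most `h` is in `T = ⋃ i, T i`,
then `Γ ∈ T`. -/
theorem union_of_h_simple_is_h_Helly
    {α : Type*} (h : ℕ) (hpos : 1 ≤ h) (T : Fin h → Set (Set α))
    (hHelly : ∀ i, ∀ Γ : Set α, (∀ R ∈ Γ, ({R} : Set α) ∈ T i) → Γ ∈ T i)
    (hHered : ∀ i, ∀ Γ Γ' : Set α, Γ ∈ T i → Γ' ⊆ Γ → Γ' ∈ T i)
    (Γ : Set α)
    (hsub : ∀ Γ' ⊆ Γ, Γ'.Finite → Γ'.encard ≤ h → Γ' ∈ ⋃ i, T i) :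
    Γ ∈ ⋃ i, T i := by
  by_cases hc : ∃ i, ∀ R ∈ Γ, ({R} : Set α) ∈ T i
  · obtain ⟨i, hi⟩ := hc
    exact Set.mem_iUnion.2 ⟨i, hHelly i Γ hi⟩
  · push_neg at hc
    choose f hfΓ hfT using hc
    have hran : Set.range f ⊆ Γ := by rintro x ⟨i, rfl⟩; exact hfΓ i
    have hfin : (Set.range f).Finite := Set.finite_range f
    have hcard : (Set.range f).encard ≤ h := by
      calc (Set.range f).encard ≤ (Set.univ : Set (Fin h)).encard := by
            rw [← Set.image_univ]; exact Set.encard_image_le _ _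
        _ = h := by simp [Set.encard_univ]
    obtain ⟨j, hj⟩ := Set.mem_iUnion.1 (hsub _ hran hfin hcard)
    exact absurd (hHered j _ {f j} hj (by simp)) (hfT j)
end

section
/- Value-renamability construction for TSI: let Γ be a language over domain D with a totally symmetric idempotent polymorphism f₁ (viewed as a set function on nonempty subsets of D), let D₁ ⊆ D be a conservative subdomain (i.e., f₁(A) ∈ D₁ for every nonempty A ⊆ D₁), and let φ : D₁ → D₂ be a bijection with D₂ ∩ D = ∅. Define f on nonempty subsets of D ∪ D₂ by: f(A) = f₁(A) if A ⊆ D, f(A) = φ(f₁(φ⁻¹(A))) if A ⊆ D₂, and f(A) = max(A) otherwise. Then f is a totally symmetric idempotent operation that is a polymorphism of Γ ∪ {R_φ}, where R_φ = {(d, φ(d)) : d ∈ D₁}. -/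
/-- A set function `g` (a totally symmetric operation) preserves `R`. -/
def SetPreserves (g : Finset ℕ → ℕ) (R : NRel) : Prop :=
  ∀ (k : ℕ) (ts : Fin (k + 1) → (Fin R.1 → ℕ)), (∀ i, ts i ∈ R.2) →
    (fun j => g (Finset.univ.image fun i => ts i j)) ∈ R.2

/-- The graph of `φ` restricted to `D₁`, as a binary relation. -/
def graphRel (φ : ℕ → ℕ) (D₁ : Finset ℕ) : NRel :=
  ⟨2, {t | ∃ d ∈ D₁, t = ![d, φ d]}⟩

/-- Value-renamability construction for TSI: if `Γ` over `D` has the TSI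
polymorphism `f₁` (a set function), `D₁ ⊆ D` is a conservative subdomain,
and `φ : D₁ → D₂` is a bijection onto a fresh domain `D₂` (with left inverse
`ψ` on `D₁`), then the set function `f` defined by `f₁` on subsets of `D`,
by `φ ∘ f₁ ∘ φ⁻¹` on subsets of `D₂`, and by max elsewhere, is a TSI
operation preserving `Γ ∪ {R_φ}`. -/
theorem TSI_value_renamable
    (D D₁ D₂ : Finset ℕ) (hD₁ : D₁ ⊆ D)
    (φ ψ : ℕ → ℕ) (hφ : D₂ = D₁.image φ) (hdisj : Disjoint D₂ D)
    (hinv : ∀ x ∈ D₁, ψ (φ x) = x)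
    (Γ : Set NRel) (hdom : ∀ R ∈ Γ, ∀ t ∈ R.2, ∀ j, t j ∈ D)
    (f₁ : Finset ℕ → ℕ)
    (hid₁ : ∀ x ∈ D, f₁ {x} = x)
    (hcons : ∀ A : Finset ℕ, A.Nonempty → A ⊆ D₁ → f₁ A ∈ D₁)
    (hpol : ∀ R ∈ Γ, SetPreserves f₁ R)
    (f : Finset ℕ → ℕ)
    (hf : ∀ A : Finset ℕ,
      f A = if A ⊆ D then f₁ A
            else if A ⊆ D₂ then φ (f₁ (A.image ψ))
            else A.max.getD 0) :
    (∀ x ∈ D ∪ D₂, f {x} = x)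
    ∧ (∀ R ∈ Γ, SetPreserves f R)
    ∧ SetPreserves f (graphRel φ D₁) := by
  have hsub : ∀ A : Finset ℕ, A.Nonempty → A ⊆ D → f A = f₁ A := by
    intro A _ hA; rw [hf, if_pos hA]
  refine ⟨?_, ?_, ?_⟩
  · intro x hx
    rcases Finset.mem_union.mp hx with h | h
    · rw [hf, if_pos (by simpa using h)]
      exact hid₁ x h
    · have hxD : x ∉ D := Finset.disjoint_left.mp hdisj h
      rw [hf, if_neg (by simpa using hxD), if_pos (by simpa using h)]
      rw [hφ] at h
      obtain ⟨d, hd, rfl⟩ := Finset.mem_image.mp h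
      rw [Finset.image_singleton, hinv d hd, hid₁ d (hD₁ hd)]
  · intro R hR k ts hts
    have heq : (fun j => f (Finset.univ.image fun i => ts i j)) =
        (fun j => f₁ (Finset.univ.image fun i => ts i j)) := by
      funext j
      refine hsub _ ⟨ts 0 j, Finset.mem_image_of_mem (fun i => ts i j) (Finset.mem_univ (0 : Fin (k+1)))⟩ ?_
      intro x hx
      obtain ⟨i, _, rfl⟩ := Finset.mem_image.mp hx
      exact hdom R hR (ts i) (hts i) j
    rw [heq]
    exact hpol R hR k ts hts
  · intro k ts hts
    have hts2 : ∀ i, ts i ∈ {t : Fin 2 → ℕ | ∃ d ∈ D₁, t = ![d, φ d]} := hts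
    show (fun j : Fin 2 => f (Finset.univ.image fun i => ts i j))
      ∈ {t : Fin 2 → ℕ | ∃ d ∈ D₁, t = ![d, φ d]}
    choose d hd hts' using hts2
    set A : Finset ℕ := Finset.univ.image d with hA
    have hAne : A.Nonempty := ⟨d 0, Finset.mem_image_of_mem d (Finset.mem_univ 0)⟩
    have hAD₁ : A ⊆ D₁ := by
      intro x hx; obtain ⟨i, _, rfl⟩ := Finset.mem_image.mp hx; exact hd i
    have hfA : f₁ A ∈ D₁ := hcons A hAne hAD₁
    refine ⟨f₁ A, hfA, ?_⟩
    funext j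
    have h0img : (Finset.univ.image fun i => ts i ((0 : Fin 2))) = A := by
      rw [hA]
      apply Finset.image_congr
      intro i _
      show ts i ((0 : Fin 2)) = d i
      rw [hts' i]; rfl
    have h1img : (Finset.univ.image fun i => ts i ((1 : Fin 2))) = A.image φ := by
      rw [hA, Finset.image_image]
      apply Finset.image_congr
      intro i _
      show ts i ((1 : Fin 2)) = (φ ∘ d) i
      rw [hts' i]; rfl
    have hBD₂ : A.image φ ⊆ D₂ := by
      rw [hφ]; exact Finset.image_subset_image hAD₁
    have hBnotD : ¬ A.image φ ⊆ D := by
      intro hc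
      obtain ⟨b, hb⟩ := hAne.image φ
      exact Finset.disjoint_left.mp hdisj (hBD₂ hb) (hc hb)
    have hBψ : (A.image φ).image ψ = A := by
      rw [Finset.image_image]
      calc A.image (ψ ∘ φ) = A.image id := Finset.image_congr
            (fun x hx => hinv x (hAD₁ hx))
        _ = A := Finset.image_id
    fin_cases j
    · show f (Finset.univ.image fun i => ts i ((0 : Fin 2))) = _
      rw [h0img, hsub A hAne (hAD₁.trans hD₁)]; rfl
    · show f (Finset.univ.image fun i => ts i ((1 : Fin 2))) = _
      rw [h1img, hf, if_neg hBnotD, if_pos hBD₂, hBψ]; rfl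
end
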